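/- Let A ⊂ ℂ be closed, discrete, and infinite, with z + 1 an automorphism of ℂ \ A (i.e., A + 1 = A) such that the strip S = {x + iy : 0 ≤ x < 1} meets A in infinitely many points. If f: ℂ → ℂ is a homeomorphism with f(ℤ) = A, then sup_{a ∈ A} |f⁻¹(a) - f⁻¹(a-1)| = +∞. -/

import Mathlib

lemma stmt9_walk1 (C R : ℤ) (hC : 0 ≤ C) (v : ℕ → ℤ)
    (hstep : ∀ n, v (n + 1) ≤ v n + C) (h0 : v 0 ≤ R) :
    ∀ m : ℕ, R ≤ v m → ∃ j, R ≤ v j ∧ v j ≤ R + C := by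
  intro m
  induction m with
  | zero => intro hm; exact ⟨0, hm, by omega⟩
  | succ n ih =>
    intro hm
    rcases le_or_gt R (v n) with h | h
    · exact ih h
    · exact ⟨n + 1, hm, by have := hstep n; omega⟩

lemma stmt9_walk2 (C R : ℤ) (hC : 0 ≤ C) (u : ℤ → ℤ)
    (hstep : ∀ k, |u (k + 1) - u k| ≤ C) (h0 : u 0 ≤ R) (k : ℤ) (hk : R ≤ u k) :
    ∃ j : ℤ, R ≤ u j ∧ u j ≤ R + C := by
  rcases le_or_gt 0 k with hk0 | hk0
  · obtain ⟨j, hj1, hj2⟩ := stmt9_walk1 C R hC (fun n => u n)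
      (fun n => by have := abs_le.mp (hstep n); push_cast; omega) (by simpa using h0) k.toNat
      (by rw [Int.toNat_of_nonneg hk0]; exact hk)
    exact ⟨j, hj1, hj2⟩
  · obtain ⟨j, hj1, hj2⟩ := stmt9_walk1 C R hC (fun n => u (-n))
      (fun n => by have := abs_le.mp (hstep (-(n:ℤ) - 1)); push_cast
                   have e : (-(n:ℤ) - 1) + 1 = -n := by ring
                   rw [e] at this
                   have e2 : -((n:ℤ) + 1) = -(n:ℤ) - 1 := by ring
                   rw [e2]; omega)
      (by simpa using h0)
      (-k).toNat (by rw [Int.toNat_of_nonneg (by omega : (0:ℤ) ≤ -k)]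
                     simpa using hk)
    exact ⟨-j, hj1, hj2⟩

lemma stmt9_hit (C R : ℤ) (hC : 0 ≤ C) (u : ℤ → ℤ) (hinj : Function.Injective u)
    (hstep : ∀ k, |u (k + 1) - u k| ≤ C) (hR : |u 0| ≤ R) :
    ∃ j : ℤ, R ≤ |u j| ∧ |u j| ≤ R + C := by
  have h0 := abs_le.mp hR
  have hfin : (Set.Icc (-(R + C)) (R + C)).Finite := Set.finite_Icc _ _
  have hrange : (Set.range u).Infinite := Set.infinite_range_of_injective hinj
  have hsub : ¬ Set.range u ⊆ Set.Icc (-(R + C)) (R + C) := fun h => hrange (hfin.subset h)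
  obtain ⟨x, ⟨k, rfl⟩, hx⟩ := Set.not_subset.mp hsub
  simp only [Set.mem_Icc, not_and_or, not_le] at hx
  rcases hx with hx | hx
  · obtain ⟨j, hj1, hj2⟩ := stmt9_walk2 C R hC (fun k => -u k)
      (fun k => by have := abs_le.mp (hstep k); rw [abs_le]; constructor <;> omega)
      (by show -u 0 ≤ R; omega) k (by show R ≤ -u k; omega)
    have hj1' : R ≤ -u j := hj1
    have hj2' : -u j ≤ R + C := hj2
    exact ⟨j, by rw [abs_of_nonpos (by omega)]; omega, by rw [abs_of_nonpos (by omega)]; omega⟩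
  · obtain ⟨j, hj1, hj2⟩ := stmt9_walk2 C R hC u hstep (by omega) k (by omega)
    exact ⟨j, by rw [abs_of_nonneg (by omega)]; omega, by rw [abs_of_nonneg (by omega)]; omega⟩

theorem stmt9 (A : Set ℂ) (hA : IsClosed A) (hdisc : DiscreteTopology A)
    (hinf : A.Infinite)
    (hperiod : (fun z => z + 1) '' A = A)
    (hstrip : {a ∈ A | 0 ≤ a.re ∧ a.re < 1}.Infinite)
    (f : ℂ ≃ₜ ℂ) (hf : f '' (Set.range ((↑) : ℤ → ℂ)) = A) :
    ∀ M : ℝ, ∃ a ∈ A, M < dist (f.symm a) (f.symm (a - 1)) := by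
  classical
  by_contra h
  push_neg at h
  obtain ⟨M, hM⟩ := h
  -- hM : ∀ a ∈ A, dist (f.symm a) (f.symm (a - 1)) ≤ M
  set C : ℤ := max ⌈M⌉ 0 with hCdef
  have hC : 0 ≤ C := le_max_right _ _
  have hMC : M ≤ (C : ℝ) := le_trans (Int.le_ceil M) (by exact_mod_cast le_max_left _ _)
  -- A is closed under adding integers
  have hA1 : ∀ a ∈ A, a + 1 ∈ A := by
    intro a ha; rw [← hperiod]; exact ⟨a, ha, rfl⟩
  have hAm1 : ∀ a ∈ A, a - 1 ∈ A := by
    intro a ha; rw [← hperiod] at ha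
    obtain ⟨b, hb, hba⟩ := ha
    simp only at hba
    rw [← hba]; simpa using hb
  have hAk : ∀ k : ℤ, ∀ a ∈ A, a + k ∈ A := by
    intro k
    induction k using Int.induction_on with
    | zero => simpa using fun a ha => ha
    | succ n ih =>
      intro a ha
      have h1 := hA1 _ (ih a ha)
      have e : a + (((n : ℤ) + 1 : ℤ) : ℂ) = a + ((n : ℤ) : ℂ) + 1 := by push_cast; ring
      rw [e]; exact h1
    | pred n ih =>
      intro a ha
      have h1 := hAm1 _ (ih a ha)
      have e : a + ((-(n : ℤ) - 1 : ℤ) : ℂ) = a + ((-(n : ℤ) : ℤ) : ℂ) - 1 := by push_cast; ring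
      rw [e]; exact h1
  -- pull back to integers
  have hGex : ∀ a ∈ A, ∃ n : ℤ, (n : ℂ) = f.symm a := by
    intro a ha
    rw [← hf] at ha
    obtain ⟨z, hz, hza⟩ := ha
    obtain ⟨n, hn⟩ := hz
    exact ⟨n, by rw [hn, ← hza, Homeomorph.symm_apply_apply]⟩
  set G : ℂ → ℤ := fun z => if h : ∃ n : ℤ, (n : ℂ) = f.symm z then h.choose else 0 with hGdef
  have hG : ∀ a ∈ A, (G a : ℂ) = f.symm a := by
    intro a ha
    have h := hGex a ha
    simp only [hGdef, dif_pos h]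
    exact h.choose_spec
  -- the conjugated walks
  set u : ℂ → ℤ → ℤ := fun a k => G (a + k) with hudef
  have hmemk : ∀ a ∈ A, ∀ k : ℤ, a + (k : ℂ) ∈ A := fun a ha k => hAk k a ha
  have huG : ∀ a ∈ A, ∀ k : ℤ, ((u a k : ℂ)) = f.symm (a + k) :=
    fun a ha k => hG _ (hmemk a ha k)
  have huinj : ∀ a ∈ A, Function.Injective (u a) := by
    intro a ha k j hkj
    have : f.symm (a + k) = f.symm (a + j) := by
      rw [← huG a ha k, ← huG a ha j, hkj]
    have h2 := f.symm.injective this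
    have h3 : (k : ℂ) = j := add_left_cancel h2
    exact_mod_cast h3
  have hustep : ∀ a ∈ A, ∀ k : ℤ, |u a (k + 1) - u a k| ≤ C := by
    intro a ha k
    have h1 : a + ((k : ℂ) + 1) ∈ A := by
      have := hmemk a ha (k + 1)
      rwa [show (((k : ℤ) + 1 : ℤ) : ℂ) = (k : ℂ) + 1 by push_cast; ring] at this
    have h2 := hM _ h1
    have e1 : a + ((k : ℂ) + 1) - 1 = a + k := by ring
    rw [e1] at h2
    have e2 : f.symm (a + ((k:ℂ) + 1)) = ((u a (k+1) : ℂ)) := by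
      rw [huG a ha (k+1)]; push_cast; ring_nf
    have e3 : f.symm (a + (k:ℂ)) = ((u a k : ℂ)) := (huG a ha k).symm
    rw [e2, e3] at h2
    have hdd : dist ((u a (k+1) : ℂ)) ((u a k : ℂ)) = |((u a (k+1) - u a k : ℤ) : ℝ)| := by
      rw [Complex.dist_eq,
        show ((u a (k+1) : ℂ)) - ((u a k : ℂ)) = (((u a (k+1) - u a k : ℤ)) : ℂ) by push_cast; ring,
        Complex.norm_intCast]
    rw [hdd] at h2
    have : |((u a (k+1) - u a k : ℤ) : ℝ)| ≤ (C : ℝ) := le_trans h2 hMC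
    exact_mod_cast (by push_cast at this ⊢; exact this : ((|u a (k+1) - u a k| : ℤ) : ℝ) ≤ (C:ℝ))
  -- disjointness for distinct strip points
  have hdisj : ∀ a ∈ {a ∈ A | 0 ≤ a.re ∧ a.re < 1}, ∀ b ∈ {a ∈ A | 0 ≤ a.re ∧ a.re < 1},
      ∀ k j : ℤ, u a k = u b j → a = b := by
    rintro a ⟨haA, ha0, ha1⟩ b ⟨hbA, hb0, hb1⟩ k j huv
    have : f.symm (a + k) = f.symm (b + j) := by
      rw [← huG a haA k, ← huG b hbA j, huv]
    have heq : a + (k : ℂ) = b + (j : ℂ) := f.symm.injective this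
    have hre : a.re + (k : ℝ) = b.re + (j : ℝ) := by
      have := congrArg Complex.re heq
      simpa using this
    have hkj : k = j := by
      have : ((k : ℝ) - j) = b.re - a.re := by linarith
      have habs : |(k : ℝ) - j| < 1 := by rw [this]; rw [abs_lt]; constructor <;> linarith
      have h4 : |((k - j : ℤ) : ℝ)| < 1 := by push_cast; exact habs
      have h5 : ((|k - j| : ℤ) : ℝ) < 1 := by push_cast at h4 ⊢; exact h4
      have h6 : |k - j| < 1 := by exact_mod_cast h5
      have := abs_lt.mp h6
      omega
    subst hkj
    have : (a + (k:ℂ)) - k = (b + (k:ℂ)) - k := by rw [heq]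
    simpa using this
  -- pick 2C+3 strip points
  obtain ⟨t, hts, htc⟩ := hstrip.exists_subset_card_eq (2 * C.toNat + 3)
  -- bound their base values
  obtain ⟨R, hR⟩ := (t.image fun a => |G a|).exists_le
  -- each walk hits the annulus
  have hhit : ∀ a ∈ t, ∃ j : ℤ, R ≤ |u a j| ∧ |u a j| ≤ R + C := by
    intro a hat
    have haA : a ∈ A := (hts hat).1
    apply stmt9_hit C R hC (u a) (huinj a haA) (hustep a haA)
    have : u a 0 = G a := by simp [hudef]
    rw [this]
    exact hR _ (Finset.mem_image_of_mem _ hat)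
  choose! j hj1 hj2 using hhit
  -- pigeonhole into the annulus window
  set W : Finset ℤ := Finset.Icc (-(R + C)) (-R) ∪ Finset.Icc R (R + C) with hWdef
  have hmap : ∀ a ∈ t, u a (j a) ∈ W := by
    intro a hat
    have h1 := hj1 a hat
    have h2 := hj2 a hat
    rcases le_or_gt 0 (u a (j a)) with h | h
    · rw [abs_of_nonneg h] at h1 h2
      exact Finset.mem_union_right _ (Finset.mem_Icc.mpr ⟨h1, h2⟩)
    · rw [abs_of_neg h] at h1 h2
      exact Finset.mem_union_left _ (Finset.mem_Icc.mpr ⟨by omega, by omega⟩)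
  have hinjOn : Set.InjOn (fun a => u a (j a)) t := by
    intro a hat b hbt hab
    exact hdisj a (hts hat) b (hts hbt) (j a) (j b) hab
  have hcard := Finset.card_le_card_of_injOn (fun a => u a (j a)) hmap hinjOn
  have hWcard : W.card ≤ 2 * C.toNat + 2 := by
    calc W.card ≤ (Finset.Icc (-(R + C)) (-R)).card + (Finset.Icc R (R + C)).card :=
          Finset.card_union_le _ _
      _ ≤ 2 * C.toNat + 2 := by
          rw [Int.card_Icc, Int.card_Icc]
          omega
  omega
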